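/- If W_1(t),...,W_N(t) solve the gradient flow of L^N with balanced initial values (W_{j+1}^T(0) W_{j+1}(0) = W_j(0) W_j^T(0) for all j), then W_{j+1}^T(t) W_{j+1}(t) = W_j(t) W_j^T(t) for all j and all t ≥ 0. -/

import Mathlib

open Matrix

/-- Cast a matrix along equalities of its (Fin) dimensions. -/
def mcast {a b c e : ℕ} (h1 : a = b) (h2 : c = e) (M : Matrix (Fin a) (Fin c) ℝ) :
    Matrix (Fin b) (Fin e) ℝ :=
  M.submatrix (Fin.cast h1.symm) (Fin.cast h2.symm)

/-- The product W_{a+k} ⋯ W_{a+1} of `k` consecutive layer matrices starting at layer `a`. -/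
def segProd (d : ℕ → ℕ) (W : ∀ i : ℕ, Matrix (Fin (d (i + 1))) (Fin (d i)) ℝ) (a : ℕ) :
    (k : ℕ) → Matrix (Fin (d (a + k))) (Fin (d a)) ℝ
  | 0 => (1 : Matrix (Fin (d a)) (Fin (d a)) ℝ)
  | (k + 1) => W (a + k) * segProd d W a k

/-- The full product W = W_N ⋯ W_1 of all `N` layers. -/
def netProd (N : ℕ) (d : ℕ → ℕ) (W : ∀ i : ℕ, Matrix (Fin (d (i + 1))) (Fin (d i)) ℝ) :
    Matrix (Fin (d N)) (Fin (d 0)) ℝ :=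
  mcast (congrArg d (Nat.zero_add N)) rfl (segProd d W 0 N)

/-- L^N(W_1,…,W_N) = (1/2) ‖Y - W_N⋯W_1 X‖_F². -/
noncomputable def LN (N : ℕ) (d : ℕ → ℕ) (m : ℕ)
    (X : Matrix (Fin (d 0)) (Fin m) ℝ) (Y : Matrix (Fin (d N)) (Fin m) ℝ)
    (W : ∀ i : ℕ, Matrix (Fin (d (i + 1))) (Fin (d i)) ℝ) : ℝ :=
  (1 / 2) * Matrix.trace ((Y - netProd N d W * X) * (Y - netProd N d W * X)ᵀ)

/-- The claimed gradient ∇_{W_{j+1}} L^N = W_{j+2}ᵀ⋯W_Nᵀ (W X Xᵀ - Y Xᵀ) W_1ᵀ⋯W_jᵀ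
(0-based index `j`). -/
noncomputable def gradLN (N : ℕ) (d : ℕ → ℕ) (m : ℕ)
    (X : Matrix (Fin (d 0)) (Fin m) ℝ) (Y : Matrix (Fin (d N)) (Fin m) ℝ)
    (W : ∀ i : ℕ, Matrix (Fin (d (i + 1))) (Fin (d i)) ℝ) (j : ℕ) (hj : j < N) :
    Matrix (Fin (d (j + 1))) (Fin (d j)) ℝ :=
  (mcast (congrArg d (by omega : (j + 1) + (N - (j + 1)) = N)) rfl
      (segProd d W (j + 1) (N - (j + 1))))ᵀ *
    (netProd N d W * X * Xᵀ - Y * Xᵀ) *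
    (mcast (congrArg d (Nat.zero_add j)) rfl (segProd d W 0 j))ᵀ


lemma mcast_mul {a b f g c e : ℕ} (h1 : a = b) (h3 : f = g) (h2 : c = e)
    (A : Matrix (Fin a) (Fin f) ℝ) (B : Matrix (Fin f) (Fin c) ℝ) :
    mcast h1 h2 (A * B) = mcast h1 h3 A * mcast h3 h2 B := by
  subst h1; subst h2; subst h3; rfl

lemma mcast_W (d : ℕ → ℕ) (W : ∀ i : ℕ, Matrix (Fin (d (i + 1))) (Fin (d i)) ℝ)
    {j k : ℕ} (h : j = k) (h1 : d (j+1) = d (k+1)) (h2 : d j = d k) :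
    mcast h1 h2 (W j) = W k := by subst h; rfl

lemma segProd_peel (d : ℕ → ℕ) (W : ∀ i : ℕ, Matrix (Fin (d (i + 1))) (Fin (d i)) ℝ)
    (a : ℕ) : ∀ (k : ℕ) (h1 : d ((a+1) + k) = d (a + (k+1))),
    segProd d W a (k+1) = mcast h1 rfl (segProd d W (a+1) k) * W a
  | 0, h1 => by
      show W a * (1 : Matrix (Fin (d a)) (Fin (d a)) ℝ)
          = (1 : Matrix (Fin (d (a+1))) (Fin (d (a+1))) ℝ) * W a
      rw [Matrix.mul_one, Matrix.one_mul]
  | (k+1), h1 => by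
      have h' : d ((a+1) + k) = d (a + (k+1)) := congrArg d (by omega)
      show W (a + (k+1)) * segProd d W a (k+1)
          = mcast h1 rfl (W ((a+1) + k) * segProd d W (a+1) k) * W a
      rw [mcast_mul h1 h' rfl, mcast_W d W (by omega : (a+1)+k = a+(k+1)),
          segProd_peel d W a k h', Matrix.mul_assoc]

lemma segProd_cast (d : ℕ → ℕ) (W : ∀ i : ℕ, Matrix (Fin (d (i + 1))) (Fin (d i)) ℝ)
    (a : ℕ) {k k' : ℕ} (h : k = k') (h1 : d (a + k) = d (a + k')) :
    mcast h1 rfl (segProd d W a k) = segProd d W a k' := by subst h; rfl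

lemma mcast_trans' {a b c e f g : ℕ} (h1 : a = b) (h2 : b = c) (h3 : e = f) (h4 : f = g)
    (M : Matrix (Fin a) (Fin e) ℝ) :
    mcast h2 h4 (mcast h1 h3 M) = mcast (h1.trans h2) (h3.trans h4) M := rfl

/-- Abstract algebra core of the balancedness conservation. -/
lemma core {n p q r s : ℕ}
    (P : Matrix (Fin n) (Fin q) ℝ) (W1 : Matrix (Fin q) (Fin p) ℝ)
    (W0 : Matrix (Fin p) (Fin r) ℝ) (S : Matrix (Fin r) (Fin s) ℝ)
    (E : Matrix (Fin n) (Fin s) ℝ) :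
    (Pᵀ * E * (W0 * S)ᵀ)ᵀ * W1 + W1ᵀ * (Pᵀ * E * (W0 * S)ᵀ)
      = ((P * W1)ᵀ * E * Sᵀ) * W0ᵀ + W0 * ((P * W1)ᵀ * E * Sᵀ)ᵀ := by
  simp only [Matrix.transpose_mul, Matrix.transpose_transpose, Matrix.mul_assoc]
  rw [add_comm]

lemma grad_bal (N : ℕ) (d : ℕ → ℕ) (m : ℕ)
    (X : Matrix (Fin (d 0)) (Fin m) ℝ) (Y : Matrix (Fin (d N)) (Fin m) ℝ)
    (W' : ∀ i : ℕ, Matrix (Fin (d (i + 1))) (Fin (d i)) ℝ)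
    (j : ℕ) (hj1 : j + 1 < N) (hj : j < N) :
    (gradLN N d m X Y W' (j+1) hj1)ᵀ * W' (j+1) + (W' (j+1))ᵀ * gradLN N d m X Y W' (j+1) hj1
      = gradLN N d m X Y W' j hj * (W' j)ᵀ + W' j * (gradLN N d m X Y W' j hj)ᵀ := by
  set E := netProd N d W' * X * Xᵀ - Y * Xᵀ with hE
  set P : Matrix (Fin (d N)) (Fin (d (j+1+1))) ℝ :=
    mcast (congrArg d (by omega : ((j+1) + 1) + (N - ((j+1) + 1)) = N)) rfl
      (segProd d W' ((j+1) + 1) (N - ((j+1) + 1))) with hP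
  set S : Matrix (Fin (d j)) (Fin (d 0)) ℝ :=
    mcast (congrArg d (Nat.zero_add j)) rfl (segProd d W' 0 j) with hS
  have hR : mcast (congrArg d (Nat.zero_add (j+1))) rfl (segProd d W' 0 (j+1))
      = W' j * S := by
    rw [show segProd d W' 0 (j+1) = W' (0 + j) * segProd d W' 0 j from rfl,
        mcast_mul _ (congrArg d (Nat.zero_add j)) rfl,
        mcast_W d W' (Nat.zero_add j)]
  have hQ : mcast (congrArg d (by omega : (j + 1) + (N - (j + 1)) = N)) rfl
        (segProd d W' (j + 1) (N - (j + 1)))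
      = P * W' (j+1) := by
    have hk : (N - ((j+1)+1)) + 1 = N - (j+1) := by omega
    rw [← segProd_cast d W' (j+1) hk (congrArg d (by omega)),
        mcast_trans',
        segProd_peel d W' (j+1) (N - ((j+1)+1)) (congrArg d (by omega)),
        mcast_mul _ (rfl) rfl, mcast_trans']
    rfl
  have g1 : gradLN N d m X Y W' (j+1) hj1 = Pᵀ * E * (W' j * S)ᵀ := by
    rw [← hR]; rfl
  have g0 : gradLN N d m X Y W' j hj = (P * W' (j+1))ᵀ * E * Sᵀ := by
    rw [← hQ]; rfl
  rw [g1, g0]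
  exact core P (W' (j+1)) (W' j) S E



/-- If the initial values of the gradient flow of L^N are balanced, then they stay balanced
for all t ≥ 0. -/
theorem stmt3 (N : ℕ) (hN : 2 ≤ N) (d : ℕ → ℕ) (m : ℕ)
    (X : Matrix (Fin (d 0)) (Fin m) ℝ) (Y : Matrix (Fin (d N)) (Fin m) ℝ)
    (W : ℝ → ∀ i : ℕ, Matrix (Fin (d (i + 1))) (Fin (d i)) ℝ)
    (hflow : ∀ (j : ℕ) (hj : j < N) (t : ℝ) (a : Fin (d (j + 1))) (b : Fin (d j)),
      HasDerivAt (fun s : ℝ => W s j a b) (-(gradLN N d m X Y (W t) j hj a b)) t)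
    (hbal0 : ∀ j, j + 1 < N → (W 0 (j + 1))ᵀ * W 0 (j + 1) = W 0 j * (W 0 j)ᵀ) :
    ∀ t : ℝ, 0 ≤ t → ∀ j, j + 1 < N →
      (W t (j + 1))ᵀ * W t (j + 1) = W t j * (W t j)ᵀ := by
  intro t ht j hj1
  have hj : j < N := by omega
  ext a b
  set g : ℝ → ℝ := fun s =>
    (∑ k, W s (j+1) k a * W s (j+1) k b) - ∑ k, W s j a k * W s j b k with hgdef
  have hg : ∀ s : ℝ, HasDerivAt g 0 s := by
    intro s
    set G1 := gradLN N d m X Y (W s) (j+1) hj1 with hG1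
    set G0 := gradLN N d m X Y (W s) j hj with hG0
    have h1 : HasDerivAt (fun u => ∑ k, W u (j+1) k a * W u (j+1) k b)
        (∑ k, ((-(G1 k a)) * W s (j+1) k b + W s (j+1) k a * (-(G1 k b)))) s :=
      HasDerivAt.fun_sum fun k _ => (hflow (j+1) hj1 s k a).mul (hflow (j+1) hj1 s k b)
    have h2 : HasDerivAt (fun u => ∑ k, W u j a k * W u j b k)
        (∑ k, ((-(G0 a k)) * W s j b k + W s j a k * (-(G0 b k)))) s :=
      HasDerivAt.fun_sum fun k _ => (hflow j hj s a k).mul (hflow j hj s b k)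
    have h3 := h1.sub h2
    have hb := grad_bal N d m X Y (W s) j hj1 hj
    have hbe := congrFun (congrFun hb a) b
    simp only [Matrix.add_apply, Matrix.mul_apply, Matrix.transpose_apply] at hbe
    have hz : (∑ k, ((-(G1 k a)) * W s (j+1) k b + W s (j+1) k a * (-(G1 k b))))
        - (∑ k, ((-(G0 a k)) * W s j b k + W s j a k * (-(G0 b k)))) = 0 := by
      simp only [neg_mul, mul_neg, Finset.sum_add_distrib, Finset.sum_neg_distrib]
      rw [← hG1, ← hG0] at hbe
      linarith [hbe]
    rwa [hz] at h3
  have hconst : g t = g 0 :=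
    is_const_of_deriv_eq_zero (fun x => (hg x).differentiableAt) (fun x => (hg x).deriv) t 0
  have hz0 : g 0 = 0 := by
    have hbe := congrFun (congrFun (hbal0 j hj1) a) b
    simp only [Matrix.mul_apply, Matrix.transpose_apply] at hbe
    simp only [hgdef, hbe, sub_self]
  have hgt : g t = 0 := hconst.trans hz0
  simp only [hgdef, sub_eq_zero] at hgt
  simpa only [Matrix.mul_apply, Matrix.transpose_apply] using hgt
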